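/- Let d ≥ 1, let a_1, …, a_n ∈ ℝ^d, let z ∈ ℝ^d, and let F = {x ∈ ℝ^d : ⟨a_i, x⟩ ≤ 1 for all i = 1,…,n}. Then there exists a nonzero vector u ∈ ℝ^d such that for every k ∈ ℕ, every family of vectors c_1, …, c_k ∈ ℝ^d with ⟨u, c_j⟩ ≤ 0 for all j, and every c ∈ ℝ: (⟨z,x⟩ ≤ c for all x ∈ F) if and only if (⟨z,x⟩ ≤ c for all x ∈ F with ⟨c_j, x⟩ ≤ 1 for all j = 1,…,k). That is, adding any finite set of constraint vectors lying in this numb half-space produces a linear program equivalent to the original one. -/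
import Mathlib

open RealInnerProductSpace Topology

open Filter Module in
/-- Shift a point along `u` to satisfy all constraints whose inner product with `u`
is negative; constraints orthogonal to `u` are unaffected. -/
private lemma exists_shift {E : Type} [NormedAddCommGroup E] [InnerProductSpace ℝ E]
    {ι : Type} [Fintype ι] (a : ι → E) (b : ι → ℝ) (u y : E)
    (hau : ∀ i, ⟪a i, u⟫ ≤ 0) (hy : ∀ i, ⟪a i, u⟫ = 0 → ⟪a i, y⟫ ≤ b i) :
    ∃ t : ℝ, 0 ≤ t ∧ ∀ i, ⟪a i, y + t • u⟫ ≤ b i := by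
  have h : ∀ i, ∀ᶠ t : ℝ in atTop, ⟪a i, y + t • u⟫ ≤ b i := by
    intro i
    rcases lt_or_eq_of_le (hau i) with hlt | heq
    · have ht : Tendsto (fun t : ℝ => ⟪a i, y⟫ + t * ⟪a i, u⟫) atTop atBot := by
        exact tendsto_atBot_add_const_left _ _
          ((tendsto_mul_const_atBot_of_neg hlt).mpr tendsto_id)
      filter_upwards [ht.eventually (eventually_le_atBot (b i))] with t ht
      simpa [inner_add_right, real_inner_smul_right] using ht
    · filter_upwards with t
      rw [inner_add_right, real_inner_smul_right, heq, mul_zero, add_zero]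
      exact hy i heq
  have h2 := (eventually_all.2 h).and (eventually_ge_atTop (0 : ℝ))
  obtain ⟨t, ht1, ht2⟩ := h2.exists
  exact ⟨t, ht2, ht1⟩

open Filter Module in
/-- From an unbounded-norm feasible sequence with not-too-negative objective values,
extract a unit recession-type direction. -/
private lemma exists_limit_dir {E : Type} [NormedAddCommGroup E] [InnerProductSpace ℝ E]
    [FiniteDimensional ℝ E] {ι : Type} [Fintype ι] (a : ι → E) (z : E)
    (x : ℕ → E) (hfeas : ∀ m, ∀ i, ⟪a i, x m⟫ ≤ 1) (hn : ∀ m : ℕ, (m : ℝ) < ‖x m‖)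
    (hv : ∀ m, -1 ≤ ⟪z, x m⟫) :
    ∃ u : E, ‖u‖ = 1 ∧ (∀ i, ⟪a i, u⟫ ≤ 0) ∧ 0 ≤ ⟪z, u⟫ := by
  have hxpos : ∀ m, (0 : ℝ) < ‖x m‖ := fun m => lt_of_le_of_lt (Nat.cast_nonneg m) (hn m)
  set w : ℕ → E := fun m => ‖x m‖⁻¹ • x m with hw
  have hwsph : ∀ m, w m ∈ Metric.sphere (0 : E) 1 := by
    intro m
    simp only [hw, mem_sphere_iff_norm, sub_zero, norm_smul, norm_inv, norm_norm]
    exact inv_mul_cancel₀ (hxpos m).ne'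
  obtain ⟨u, hu, φ, hφ, hlim⟩ :=
    tendsto_subseq_of_bounded Metric.isBounded_sphere hwsph
  rw [Metric.isClosed_sphere.closure_eq] at hu
  have hunorm : ‖u‖ = 1 := by simpa using hu
  have hnorm : Tendsto (fun m => ‖x (φ m)‖) atTop atTop := by
    apply tendsto_atTop_mono (fun m => (hn (φ m)).le.trans' (Nat.cast_le.2 hφ.le_apply))
    exact tendsto_natCast_atTop_atTop
  have hinv : Tendsto (fun m => ‖x (φ m)‖⁻¹) atTop (𝓝 0) := hnorm.inv_tendsto_atTop
  refine ⟨u, hunorm, ?_, ?_⟩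
  · intro i
    have hA : Tendsto (fun m => ⟪a i, (w ∘ φ) m⟫) atTop (𝓝 ⟪a i, u⟫) :=
      tendsto_const_nhds.inner hlim
    refine le_of_tendsto_of_tendsto' hA hinv (fun m => ?_)
    have : ⟪a i, (w ∘ φ) m⟫ = ‖x (φ m)‖⁻¹ * ⟪a i, x (φ m)⟫ := by
      simp [hw, real_inner_smul_right]
    rw [this]
    calc ‖x (φ m)‖⁻¹ * ⟪a i, x (φ m)⟫ ≤ ‖x (φ m)‖⁻¹ * 1 :=
          mul_le_mul_of_nonneg_left (hfeas (φ m) i) (inv_nonneg.2 (hxpos (φ m)).le)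
      _ = ‖x (φ m)‖⁻¹ := mul_one _
  · have hA : Tendsto (fun m => ⟪z, (w ∘ φ) m⟫) atTop (𝓝 ⟪z, u⟫) :=
      tendsto_const_nhds.inner hlim
    have hB : Tendsto (fun m => -‖x (φ m)‖⁻¹) atTop (𝓝 0) := by
      simpa using hinv.neg
    refine le_of_tendsto_of_tendsto' hB hA (fun m => ?_)
    have : ⟪z, (w ∘ φ) m⟫ = ‖x (φ m)‖⁻¹ * ⟪z, x (φ m)⟫ := by
      simp [hw, real_inner_smul_right]
    rw [this]
    calc -‖x (φ m)‖⁻¹ = ‖x (φ m)‖⁻¹ * (-1) := by ring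
      _ ≤ ‖x (φ m)‖⁻¹ * ⟪z, x (φ m)⟫ :=
          mul_le_mul_of_nonneg_left (hv (φ m)) (inv_nonneg.2 (hxpos (φ m)).le)

open Module in
/-- Fundamental dichotomy for the unit linear program: either the maximum is attained,
or there is a recession direction with positive objective value. -/
private lemma lp_attain_or_ray : ∀ (k : ℕ) (E : Type) [NormedAddCommGroup E]
    [InnerProductSpace ℝ E] [FiniteDimensional ℝ E], finrank ℝ E ≤ k →
    ∀ (ι : Type) [Fintype ι] (a : ι → E) (z : E),
    (∃ x, (∀ i, ⟪a i, x⟫ ≤ 1) ∧ ∀ y, (∀ i, ⟪a i, y⟫ ≤ 1) → ⟪z, y⟫ ≤ ⟪z, x⟫) ∨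
    (∃ u, u ≠ 0 ∧ (∀ i, ⟪a i, u⟫ ≤ 0) ∧ 0 < ⟪z, u⟫) := by
  intro k
  induction k with
  | zero =>
    intro E _ _ _ hE ι _ a z
    left
    have hss : Subsingleton E := finrank_zero_iff.mp (le_antisymm hE (Nat.zero_le _))
    refine ⟨0, fun i => by simp, fun y hy => ?_⟩
    rw [Subsingleton.elim y 0]
  | succ k ih =>
    intro E _ _ _ hE ι _ a z
    by_cases hz : z = 0
    · left; exact ⟨0, fun i => by simp, fun y hy => by simp [hz]⟩
    by_cases hC : ∃ R : ℝ, ∀ x, (∀ i, ⟪a i, x⟫ ≤ 1) →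
        ∃ y, (∀ i, ⟪a i, y⟫ ≤ 1) ∧ ‖y‖ ≤ R ∧ ⟪z, x⟫ ≤ ⟪z, y⟫
    · obtain ⟨R, hR⟩ := hC
      left
      set K : Set E := {x | ∀ i, ⟪a i, x⟫ ≤ 1} ∩ {x | ‖x‖ ≤ max R 0} with hK
      have h1 : IsClosed {x : E | ∀ i, ⟪a i, x⟫ ≤ 1} := by
        have he : {x : E | ∀ i, ⟪a i, x⟫ ≤ 1} = ⋂ i, {x : E | ⟪a i, x⟫ ≤ 1} := by
          ext x; simp [Set.mem_iInter]
        rw [he]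
        exact isClosed_iInter fun i =>
          isClosed_le (continuous_const.inner continuous_id) continuous_const
      have hKclosed : IsClosed K := h1.inter (isClosed_le continuous_norm continuous_const)
      have hKcomp : IsCompact K :=
        (isCompact_closedBall (0 : E) (max R 0)).of_isClosed_subset hKclosed
          (fun x hx => mem_closedBall_zero_iff.2 hx.2)
      have hK0 : (0 : E) ∈ K := ⟨fun i => by simp, by simp⟩
      obtain ⟨xs, hxK, hxmax⟩ := hKcomp.exists_isMaxOn ⟨0, hK0⟩
        ((continuous_const.inner continuous_id).continuousOn
          (f := fun x : E => ⟪z, x⟫))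
      refine ⟨xs, hxK.1, fun y hy => ?_⟩
      obtain ⟨y', h1, h2, h3⟩ := hR y hy
      exact h3.trans (hxmax ⟨h1, h2.trans (le_max_left _ _)⟩)
    · push_neg at hC
      choose x hfeas hdom using fun m : ℕ => hC m
      have hn : ∀ m : ℕ, (m : ℝ) < ‖x m‖ := by
        intro m
        by_contra hcon
        exact absurd le_rfl (not_le_of_gt (hdom m (x m) (hfeas m) (not_lt.1 hcon)))
      have hv : ∀ m : ℕ, -1 ≤ ⟪z, x m⟫ := by
        intro m
        have h0 : ⟪z, (0 : E)⟫ < ⟪z, x m⟫ :=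
          hdom m 0 (fun i => by simp) (by simp)
        rw [inner_zero_right] at h0
        linarith
      obtain ⟨u, hunorm, hau, hzu⟩ := exists_limit_dir a z x hfeas hn hv
      have hune : u ≠ 0 := by
        intro h; rw [h, norm_zero] at hunorm; exact one_ne_zero hunorm.symm
      rcases eq_or_lt_of_le hzu with heq | hpos
      swap
      · exact Or.inr ⟨u, hune, hau, hpos⟩
      · -- ⟪z, u⟫ = 0 : reduce to the orthogonal complement of u
        have hzmem : z ∈ (ℝ ∙ u)ᗮ :=
          Submodule.mem_orthogonal_singleton_iff_inner_right.2
            (by rw [real_inner_comm]; exact heq.symm)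
        have hamem : ∀ i : ι, ⟪a i, u⟫ = 0 → a i ∈ (ℝ ∙ u)ᗮ := fun i hi =>
          Submodule.mem_orthogonal_singleton_iff_inner_right.2
            (by rw [real_inner_comm]; exact hi)
        have hrank : finrank ℝ ((ℝ ∙ u)ᗮ : Submodule ℝ E) ≤ k := by
          have h1 := Submodule.finrank_add_finrank_orthogonal (K := (ℝ ∙ u : Submodule ℝ E))
          have h2 : finrank ℝ (ℝ ∙ u : Submodule ℝ E) = 1 := finrank_span_singleton hune
          omega
        rcases ih ((ℝ ∙ u)ᗮ : Submodule ℝ E) hrank {i : ι // ⟪a i, u⟫ = 0}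
            (fun j => ⟨a j.1, hamem j.1 j.2⟩) ⟨z, hzmem⟩ with
          ⟨ys, hy1, hy2⟩ | ⟨us, hu1, hu2, hu3⟩
        · -- lift the maximizer
          obtain ⟨t, ht0, htfe⟩ := exists_shift a (fun _ => 1) u (ys : E) hau
            (fun i hi => by simpa [Submodule.coe_inner] using hy1 ⟨i, hi⟩)
          left
          refine ⟨(ys : E) + t • u, htfe, fun y hy => ?_⟩
          have hmem : y - ⟪u, y⟫ • u ∈ (ℝ ∙ u)ᗮ := by
            apply Submodule.mem_orthogonal_singleton_iff_inner_right.2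
            rw [inner_sub_right, real_inner_smul_right, real_inner_self_eq_norm_sq, hunorm]
            ring
          have hfe' : ∀ j : {i : ι // ⟪a i, u⟫ = 0}, ⟪a j.1, y - ⟪u, y⟫ • u⟫ ≤ 1 := by
            intro j
            rw [inner_sub_right, real_inner_smul_right, j.2, mul_zero, sub_zero]
            exact hy j.1
          have hle := hy2 ⟨y - ⟪u, y⟫ • u, hmem⟩
            (fun j => by simpa [Submodule.coe_inner] using hfe' j)
          simp only [Submodule.coe_inner] at hle
          have e1 : ⟪z, y - ⟪u, y⟫ • u⟫ = ⟪z, y⟫ := by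
            rw [inner_sub_right, real_inner_smul_right, ← heq]; ring
          have e2 : ⟪z, (ys : E) + t • u⟫ = ⟪z, (ys : E)⟫ := by
            rw [inner_add_right, real_inner_smul_right, ← heq]; ring
          rw [e2]
          rw [e1] at hle
          exact hle
        · -- lift the recession direction
          obtain ⟨t, ht0, htfe⟩ := exists_shift a (fun _ => 0) u (us : E) hau
            (fun i hi => by simpa [Submodule.coe_inner] using hu2 ⟨i, hi⟩)
          right
          have hval : ⟪z, (us : E) + t • u⟫ = ⟪z, (us : E)⟫ := by
            rw [inner_add_right, real_inner_smul_right, ← heq]; ring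
          have hzpos : 0 < ⟪z, (us : E) + t • u⟫ := by
            rw [hval]
            simpa [Submodule.coe_inner] using hu3
          refine ⟨(us : E) + t • u, ?_, htfe, hzpos⟩
          intro h
          rw [h, inner_zero_right] at hzpos
          exact lt_irrefl _ hzpos

/-- Adding any finite set of constraint vectors lying in the numb half-space produces an
equivalent linear program: there is a nonzero `u` such that for any finitely many vectors
`c_1, …, c_k` with `⟪u, c_j⟫ ≤ 0`, the objective `⟪z, ·⟫` has the same upper bounds on the
feasible set `{x : ∀ i, ⟪a i, x⟫ ≤ 1}` as on its intersection with `{x : ⟪c_j, x⟫ ≤ 1 ∀ j}`. -/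
theorem numb_halfspace_add_finitely_many (d n : ℕ) (hd : 1 ≤ d)
    (a : Fin n → EuclideanSpace ℝ (Fin d)) (z : EuclideanSpace ℝ (Fin d)) :
    ∃ u : EuclideanSpace ℝ (Fin d), u ≠ 0 ∧
      ∀ (k : ℕ) (cs : Fin k → EuclideanSpace ℝ (Fin d)), (∀ j, ⟪u, cs j⟫ ≤ 0) →
        ∀ c : ℝ,
          ((∀ x : EuclideanSpace ℝ (Fin d), (∀ i, ⟪a i, x⟫ ≤ 1) → ⟪z, x⟫ ≤ c) ↔
            (∀ x : EuclideanSpace ℝ (Fin d),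
              (∀ i, ⟪a i, x⟫ ≤ 1) → (∀ j, ⟪cs j, x⟫ ≤ 1) → ⟪z, x⟫ ≤ c)) := by
  have hrank : Module.finrank ℝ (EuclideanSpace ℝ (Fin d)) ≤ d := by
    simp [finrank_euclideanSpace_fin]
  rcases lp_attain_or_ray d (EuclideanSpace ℝ (Fin d)) hrank (Fin n) a z with
    ⟨xs, hxf, hxm⟩ | ⟨u, hu0, hau, hzu⟩
  · by_cases h0 : ⟪z, xs⟫ = 0
    · refine ⟨EuclideanSpace.single ⟨0, hd⟩ (1 : ℝ), ?_, ?_⟩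
      · intro h
        have := congrArg norm h
        rw [EuclideanSpace.norm_single, norm_zero, norm_one] at this
        exact one_ne_zero this
      · intro k cs hcs c
        constructor
        · exact fun h x hx _ => h x hx
        · intro h x hx
          have h0c : (0 : ℝ) ≤ c := by
            simpa using h 0 (fun i => by simp) (fun j => by simp)
          calc ⟪z, x⟫ ≤ ⟪z, xs⟫ := hxm x hx
            _ = 0 := h0
            _ ≤ c := h0c
    · have hpos : 0 < ⟪z, xs⟫ := by
        have h00 : ⟪z, (0 : EuclideanSpace ℝ (Fin d))⟫ ≤ ⟪z, xs⟫ := hxm 0 (fun i => by simp)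
        rw [inner_zero_right] at h00
        exact lt_of_le_of_ne h00 (Ne.symm h0)
      refine ⟨xs, ?_, ?_⟩
      · intro h; rw [h, inner_zero_right] at hpos; exact lt_irrefl _ hpos
      · intro k cs hcs c
        constructor
        · exact fun h x hx _ => h x hx
        · intro h x hx
          refine (hxm x hx).trans (h xs hxf (fun j => ?_))
          rw [real_inner_comm]
          exact (hcs j).trans zero_le_one
  · refine ⟨u, hu0, fun k cs hcs c => ?_⟩
    have hkey : ∀ t : ℝ, 0 ≤ t →
        (∀ i, ⟪a i, t • u⟫ ≤ 1) ∧ (∀ j, ⟪cs j, t • u⟫ ≤ 1) := by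
      intro t ht
      constructor
      · intro i
        rw [real_inner_smul_right]
        exact (mul_nonpos_of_nonneg_of_nonpos ht (hau i)).trans zero_le_one
      · intro j
        rw [real_inner_smul_right, real_inner_comm]
        exact (mul_nonpos_of_nonneg_of_nonpos ht (hcs j)).trans zero_le_one
    have habsurd : ∀ cc : ℝ, (∀ t : ℝ, 0 ≤ t → t * ⟪z, u⟫ ≤ cc) → False := by
      intro cc hcc
      have ht0 : (0 : ℝ) ≤ max 0 ((cc + 1) / ⟪z, u⟫) := le_max_left _ _
      have := hcc _ ht0
      have h2 : (cc + 1) / ⟪z, u⟫ ≤ max 0 ((cc + 1) / ⟪z, u⟫) := le_max_right _ _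
      rw [div_le_iff₀ hzu] at h2
      linarith
    constructor
    · intro h
      exfalso
      apply habsurd c
      intro t ht
      have := h (t • u) (hkey t ht).1
      rwa [real_inner_smul_right] at this
    · intro h
      exfalso
      apply habsurd c
      intro t ht
      have := h (t • u) (hkey t ht).1 (hkey t ht).2
      rwa [real_inner_smul_right] at this
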